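/- arXiv:0906.5101 — 2 statements merged into one kernel-verified Lean document; each statement's English description precedes it below -/
import Mathlib

section
/- Let X₁, X₂,… be i.i.d. and h a kernel of order m ≥ 2 with E|h(X₁,…,X_m)|^{5/3} < ∞. Then, as n → ∞, [n]^{-2m+1} Σ_{1 ≤ i₁ ≠ … ≠ i_m ≤ n} h²(X_{i₁},…,X_{i_m}) → 0 almost surely, where [n]^{-2m+1} = (n−2m+1)!/n!. -/
open MeasureTheory ProbabilityTheory Filter Nat
open scoped ENNReal Topology
set_option maxHeartbeats 2000000

lemma aux_tsum_pi (m : ℕ) (g : ℕ → ℝ≥0∞) :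
    ∑' i : Fin m → ℕ, ∏ j, g (i j) = (∑' a, g a) ^ m := by
  induction m with
  | zero =>
    rw [tsum_eq_single (fun j : Fin 0 => (0:ℕ))
      (by intro b hb; exact absurd (funext fun j => j.elim0) hb)]
    simp
  | succ m ih =>
    rw [← (Fin.consEquiv (fun _ : Fin (m+1) => ℕ)).tsum_eq (fun i => ∏ j, g (i j))]
    have : ∀ p : (fun _ : Fin (m+1) => ℕ) 0 × (∀ i : Fin m, ℕ),
        (∏ j, g ((Fin.consEquiv (fun _ : Fin (m+1) => ℕ)) p j)) = g p.1 * ∏ j, g (p.2 j) := by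
      intro p
      rw [Fin.prod_univ_succ]
      simp [Fin.consEquiv]
    rw [tsum_congr this, ENNReal.tsum_prod']
    simp_rw [ENNReal.tsum_mul_left, ENNReal.tsum_mul_right]
    rw [ih, pow_succ, mul_comm]

lemma aux_map_pi {Ω : Type*} [MeasurableSpace Ω] (μ : Measure Ω) [IsProbabilityMeasure μ]
    (m : ℕ) (X : ℕ → Ω → ℝ) (hXmeas : ∀ i, Measurable (X i))
    (hindep : iIndepFun X μ)
    (hident : ∀ i, μ.map (X i) = μ.map (X 0))
    (i : Fin m → ℕ) (hi : Function.Injective i) :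
    μ.map (fun ω (j : Fin m) => X (i j) ω) = Measure.pi (fun _ => μ.map (X 0)) := by
  have hν : IsProbabilityMeasure (μ.map (X 0)) := Measure.isProbabilityMeasure_map (hXmeas 0).aemeasurable
  have hmeas : Measurable (fun ω (j : Fin m) => X (i j) ω) :=
    measurable_pi_lambda _ fun j => hXmeas (i j)
  refine (Measure.pi_eq (μ := fun _ : Fin m => μ.map (X 0)) fun s hs => ?_).symm
  rw [Measure.map_apply hmeas (MeasurableSet.univ_pi hs)]
  have hpre : (fun ω (j : Fin m) => X (i j) ω) ⁻¹' Set.univ.pi s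
      = ⋂ j : Fin m, X (i j) ⁻¹' s j := by
    ext ω; simp [Set.mem_univ_pi]
  set sets : ℕ → Set ℝ := fun k => ⋂ (j : Fin m) (_ : i j = k), s j with hsetsdef
  have hsets : ∀ j, sets (i j) = s j := by
    intro j
    ext x
    simp only [hsetsdef, Set.mem_iInter]
    exact ⟨fun H => H j rfl, fun H j' hj' => hi hj' ▸ H⟩
  have hsetsmeas : ∀ k, MeasurableSet (sets k) :=
    fun k => MeasurableSet.iInter fun j => MeasurableSet.iInter fun _ => hs j
  have hinter : (⋂ k ∈ Finset.image i Finset.univ, X k ⁻¹' sets k)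
      = ⋂ j : Fin m, X (i j) ⁻¹' s j := by
    ext ω
    simp only [Set.mem_iInter, Finset.mem_image, Finset.mem_univ, true_and]
    constructor
    · intro H j
      have := H (i j) ⟨j, rfl⟩
      rwa [hsets j] at this
    · rintro H k ⟨j, rfl⟩
      rw [hsets j]; exact H j
  have hmul := hindep.measure_inter_preimage_eq_mul (Finset.image i Finset.univ)
    (sets := sets) (fun k _ => hsetsmeas k)
  rw [hpre, ← hinter, hmul, Finset.prod_image (fun a _ b _ hab => hi hab)]
  refine Finset.prod_congr rfl fun j _ => ?_
  rw [hsets j, ← Measure.map_apply (hXmeas (i j)) (hs j), hident (i j)]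

lemma aux_markov {Ω : Type*} [MeasurableSpace Ω] (μ : Measure Ω)
    (f : Ω → ℝ≥0∞) (hf : Measurable f) (c : ℝ≥0∞) (hc0 : c ≠ 0) (hctop : c ≠ ⊤) :
    μ {ω | c < f ω ^ ((6:ℝ)/5)} ≤ (∫⁻ ω, f ω ∂μ) * (c ^ ((5:ℝ)/6))⁻¹ := by
  have hceq : (c ^ ((5:ℝ)/6)) ^ ((6:ℝ)/5) = c := by
    rw [← ENNReal.rpow_mul]; norm_num
  have hset : {ω | c < f ω ^ ((6:ℝ)/5)} ⊆ {ω | c ^ ((5:ℝ)/6) ≤ f ω} := by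
    intro ω hω
    simp only [Set.mem_setOf_eq] at hω ⊢
    have : c ^ ((5:ℝ)/6) < f ω := by
      rw [← ENNReal.rpow_lt_rpow_iff (z := (6:ℝ)/5) (by norm_num), hceq]; exact hω
    exact this.le
  calc μ {ω | c < f ω ^ ((6:ℝ)/5)} ≤ μ {ω | c ^ ((5:ℝ)/6) ≤ f ω} := measure_mono hset
    _ ≤ (∫⁻ ω, f ω ∂μ) / c ^ ((5:ℝ)/6) := meas_ge_le_lintegral_div hf.aemeasurable
        (by simp [ENNReal.rpow_eq_zero_iff, hc0, hctop])
        (by simp [ENNReal.rpow_eq_top_iff, hc0, hctop])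
    _ = (∫⁻ ω, f ω ∂μ) * (c ^ ((5:ℝ)/6))⁻¹ := by rw [ENNReal.div_eq_inv_mul, mul_comm]

lemma aux_trunc {Ω : Type*} [MeasurableSpace Ω] (μ : Measure Ω)
    (f : Ω → ℝ≥0∞) (hf : Measurable f) (hfin : ∀ ω, f ω ≠ ⊤) (c : ℝ≥0∞) :
    ∫⁻ ω, (if f ω ^ ((6:ℝ)/5) ≤ c then f ω ^ ((6:ℝ)/5) else 0) ∂μ
      ≤ c ^ ((1:ℝ)/6) * ∫⁻ ω, f ω ∂μ := by
  have hpt : ∀ ω, (if f ω ^ ((6:ℝ)/5) ≤ c then f ω ^ ((6:ℝ)/5) else 0) ≤ f ω * c ^ ((1:ℝ)/6) := by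
    intro ω
    split_ifs with hle
    · rcases eq_or_ne (f ω) 0 with h0 | h0
      · simp [h0, ENNReal.zero_rpow_of_pos]
      · have : f ω ^ ((6:ℝ)/5) = f ω * f ω ^ ((1:ℝ)/5) := by
          have h65 : ((6:ℝ)/5) = 1 + 1/5 := by norm_num
          rw [h65, ENNReal.rpow_add _ _ h0 (hfin ω), ENNReal.rpow_one]
        rw [this]
        refine mul_le_mul_right ?_ _
        have : f ω ^ ((1:ℝ)/5) = (f ω ^ ((6:ℝ)/5)) ^ ((1:ℝ)/6) := by
          rw [← ENNReal.rpow_mul]; norm_num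
        rw [this]
        exact ENNReal.rpow_le_rpow hle (by norm_num)
    · exact _root_.zero_le
  calc ∫⁻ ω, (if f ω ^ ((6:ℝ)/5) ≤ c then f ω ^ ((6:ℝ)/5) else 0) ∂μ
      ≤ ∫⁻ ω, f ω * c ^ ((1:ℝ)/6) ∂μ := lintegral_mono hpt
    _ = c ^ ((1:ℝ)/6) * ∫⁻ ω, f ω ∂μ := by rw [lintegral_mul_const _ hf, mul_comm]

lemma aux_pow_calc (M : ℝ≥0∞) (m r j : ℕ) :
    ((2:ℝ≥0∞)^(j:ℝ))^m * (((2:ℝ≥0∞)^(j:ℝ))^r)^((1:ℝ)/6) * M * (((2:ℝ≥0∞)^(j:ℝ))^r)⁻¹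
      = M * ((2:ℝ≥0∞)^((m:ℝ) + (r:ℝ)*(1/6) - r))^j := by
  have h2 : (2:ℝ≥0∞) ≠ 0 := by norm_num
  have h2' : (2:ℝ≥0∞) ≠ ⊤ := by norm_num
  rw [← ENNReal.rpow_natCast ((2:ℝ≥0∞)^(j:ℝ)) m, ← ENNReal.rpow_natCast ((2:ℝ≥0∞)^(j:ℝ)) r,
    ← ENNReal.rpow_mul, ← ENNReal.rpow_mul, ← ENNReal.rpow_mul,
    ← ENNReal.rpow_natCast ((2:ℝ≥0∞)^((m:ℝ) + (r:ℝ)*(1/6) - r)) j, ← ENNReal.rpow_mul,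
    ← ENNReal.rpow_neg, ← ENNReal.rpow_add _ _ h2 h2', mul_comm _ M, mul_assoc,
    ← ENNReal.rpow_add _ _ h2 h2']
  rw [← ENNReal.rpow_mul]
  congr 1
  ring

/-- Marcinkiewicz–Zygmund type SLLN (Proposition 3): if `E|h|^{5/3} < ∞` and `m ≥ 2`, then
`[n]^{-2m+1} Σ_{1 ≤ i₁≠…≠i_m ≤ n} h²(X_{i₁},…,X_{i_m}) → 0` almost surely, where
`[n]^{-2m+1} = (n−2m+1)!/n!`. -/
theorem stmt7 {Ω : Type*} [MeasurableSpace Ω] (μ : Measure Ω) [IsProbabilityMeasure μ]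
    (m : ℕ) (hm : 2 ≤ m)
    (X : ℕ → Ω → ℝ) (hXmeas : ∀ i, Measurable (X i))
    (hindep : iIndepFun X μ)
    (hident : ∀ i, μ.map (X i) = μ.map (X 0))
    (h : (Fin m → ℝ) → ℝ) (hmeas : Measurable h)
    (hint : Integrable (fun ω => |h (fun j => X j ω)| ^ ((5 : ℝ) / 3)) μ) :
    ∀ᵐ ω ∂μ, Tendsto
      (fun n => (((n - (2 * m - 1))! : ℝ) / (n ! : ℝ)) *
        ∑ i : Fin m → Fin n, if Function.Injective i then (h (fun j => X (i j) ω)) ^ 2 else 0)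
      atTop (nhds 0) := by
  classical
  set r : ℕ := 2 * m - 1 with hrdef
  have hrm : m + 1 ≤ r := by omega
  have hr1 : 1 ≤ r := by omega
  have hrcast : (r : ℝ) = 2 * (m:ℝ) - 1 := by
    rw [hrdef, Nat.cast_sub (by omega)]; push_cast; ring
  have hm2 : (2:ℝ) ≤ (m:ℝ) := by exact_mod_cast hm
  have him : ∀ i : Fin m → ℕ, Measurable fun ω (j : Fin m) => X (i j) ω :=
    fun i => measurable_pi_lambda _ fun j => hXmeas (i j)
  -- transfer of lintegrals between injective tuples
  have htrans : ∀ (i : Fin m → ℕ), Function.Injective i → ∀ (G : (Fin m → ℝ) → ℝ≥0∞),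
      Measurable G →
      ∫⁻ ω, G (fun j => X (i j) ω) ∂μ = ∫⁻ ω, G (fun j : Fin m => X j ω) ∂μ := by
    intro i hi G hG
    have h1 := aux_map_pi μ m X hXmeas hindep hident i hi
    have h2 := aux_map_pi μ m X hXmeas hindep hident (fun j : Fin m => (j:ℕ))
      (fun a b hab => Fin.val_injective hab)
    rw [← lintegral_map hG (him i), ← lintegral_map hG (him (fun j : Fin m => (j:ℕ))), h1, h2]
  set Φ : (Fin m → ℝ) → ℝ≥0∞ := fun x => ENNReal.ofReal (|h x| ^ ((5:ℝ)/3)) with hΦdef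
  have hΦmeas : Measurable Φ := by
    exact ENNReal.measurable_ofReal.comp
      ((Real.continuous_rpow_const (by norm_num)).measurable.comp hmeas.abs)
  set M : ℝ≥0∞ := ∫⁻ ω, Φ (fun j : Fin m => X j ω) ∂μ with hMdef
  have hMne : M ≠ ⊤ := by
    have h1 : HasFiniteIntegral (fun ω => |h (fun j : Fin m => X j ω)| ^ ((5:ℝ)/3)) μ :=
      hint.hasFiniteIntegral
    rw [hasFiniteIntegral_iff_ofReal (ae_of_all _ fun ω => by positivity)] at h1
    exact h1.ne
  -- kernel-level objects
  set T : (Fin m → ℕ) → Ω → ℝ≥0∞ :=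
    fun i ω => ENNReal.ofReal (h (fun j => X (i j) ω) ^ 2) with hTdef
  have hTmeas : ∀ i, Measurable (T i) :=
    fun i => ENNReal.measurable_ofReal.comp ((hmeas.comp (him i)).pow_const 2)
  have hTfin : ∀ i ω, T i ω ≠ ⊤ := fun i ω => ENNReal.ofReal_ne_top
  set Φt : (Fin m → ℕ) → Ω → ℝ≥0∞ := fun i ω => Φ (fun j => X (i j) ω) with hΦtdef
  have hΦtmeas : ∀ i, Measurable (Φt i) := fun i => hΦmeas.comp (him i)
  have hΦtfin : ∀ i ω, Φt i ω ≠ ⊤ := fun i ω => ENNReal.ofReal_ne_top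
  have hΦtint : ∀ i, Function.Injective i → ∫⁻ ω, Φt i ω ∂μ = M :=
    fun i hi => htrans i hi Φ hΦmeas
  have hTΦ : ∀ i ω, T i ω = Φt i ω ^ ((6:ℝ)/5) := by
    intro i ω
    show ENNReal.ofReal (h (fun j => X (i j) ω) ^ 2)
      = ENNReal.ofReal (|h (fun j => X (i j) ω)| ^ ((5:ℝ)/3)) ^ ((6:ℝ)/5)
    set x : ℝ := h (fun j => X (i j) ω)
    have habs : x ^ 2 = (|x| ^ ((5:ℝ)/3)) ^ ((6:ℝ)/5) := by
      have h2 : ((5:ℝ)/3) * ((6:ℝ)/5) = ((2:ℕ):ℝ) := by norm_num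
      rw [← Real.rpow_mul (abs_nonneg x), h2, Real.rpow_natCast, sq_abs]
    rw [habs, ENNReal.ofReal_rpow_of_nonneg (by positivity) (by norm_num)]
  -- the max of a tuple
  set K : (Fin m → ℕ) → ℕ := fun i => Finset.univ.sup i + 1 with hKdef
  have hKle : ∀ (i : Fin m → ℕ) (j : Fin m), i j < K i :=
    fun i j => Nat.lt_succ_of_le (Finset.le_sup (Finset.mem_univ j))
  set c : (Fin m → ℕ) → ℝ≥0∞ := fun i => ((K i : ℕ) : ℝ≥0∞) ^ r with hcdef
  have hc0 : ∀ i, c i ≠ 0 := fun i => pow_ne_zero _ (by simp [hKdef])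
  have hctop : ∀ i, c i ≠ ⊤ := fun i => ENNReal.pow_ne_top (ENNReal.natCast_ne_top _)
  have hMarkov : ∀ i, Function.Injective i →
      μ {ω | c i < T i ω} ≤ M * (c i ^ ((5:ℝ)/6))⁻¹ := by
    intro i hi
    have h1 := aux_markov μ (Φt i) (hΦtmeas i) (c i) (hc0 i) (hctop i)
    rw [hΦtint i hi] at h1
    have hset : {ω | c i < T i ω} = {ω | c i < Φt i ω ^ ((6:ℝ)/5)} := by
      ext ω; simp only [Set.mem_setOf_eq, hTΦ i ω]
    rw [hset]; exact h1
  have hTrunc : ∀ i, Function.Injective i →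
      ∫⁻ ω, (if T i ω ≤ c i then T i ω else 0) ∂μ ≤ c i ^ ((1:ℝ)/6) * M := by
    intro i hi
    have h1 := aux_trunc μ (Φt i) (hΦtmeas i) (hΦtfin i) (c i)
    rw [hΦtint i hi] at h1
    simp_rw [← hTΦ i] at h1
    exact h1
  -- finite tuple ranges
  set Tup : ℕ → Finset (Fin m → ℕ) :=
    fun n => Fintype.piFinset fun _ : Fin m => Finset.range n with hTupdef
  have hTupmem : ∀ n i, i ∈ Tup n ↔ ∀ j, i j < n := by
    intro n i; simp [hTupdef, Fintype.mem_piFinset]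
  have hTupmono : ∀ {a b : ℕ}, a ≤ b → Tup a ⊆ Tup b := by
    intro a b hab i hi
    rw [hTupmem] at hi ⊢
    exact fun j => lt_of_lt_of_le (hi j) hab
  have hTupK : ∀ n i, i ∈ Tup n → K i ≤ n := by
    intro n i hi
    rw [hTupmem] at hi
    have h0 : (0:ℕ) < n := lt_of_le_of_lt (Nat.zero_le _) (hi ⟨0, by omega⟩)
    exact Nat.succ_le_of_lt ((Finset.sup_lt_iff h0).2 fun j _ => hi j)
  have hTupcard : ∀ n, (Tup n).card = n ^ m := by
    intro n
    simp [hTupdef, Fintype.card_piFinset, Finset.card_range]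
  -- summands
  set A : (Fin m → ℕ) → Ω → ℝ≥0∞ :=
    fun i ω => if Function.Injective i then (if T i ω ≤ c i then T i ω else 0) else 0 with hAdef
  set B : (Fin m → ℕ) → Ω → ℝ≥0∞ :=
    fun i ω => if Function.Injective i then (if T i ω ≤ c i then 0 else T i ω) else 0 with hBdef
  set TT : (Fin m → ℕ) → Ω → ℝ≥0∞ :=
    fun i ω => if Function.Injective i then T i ω else 0 with hTTdef
  have hABT : ∀ i ω, TT i ω = A i ω + B i ω := by
    intro i ω
    by_cases hi : Function.Injective i <;> simp only [hTTdef, hAdef, hBdef, hi, if_true, if_false]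
    · split_ifs <;> simp
    · simp
  have hAmeas : ∀ i, Measurable (A i) := by
    intro i
    by_cases hi : Function.Injective i <;> simp only [hAdef, hi, if_true, if_false]
    · exact Measurable.ite (measurableSet_le (hTmeas i) measurable_const) (hTmeas i)
        measurable_const
    · exact measurable_const
  have hBmeas : ∀ i, Measurable (B i) := by
    intro i
    by_cases hi : Function.Injective i <;> simp only [hBdef, hi, if_true, if_false]
    · exact Measurable.ite (measurableSet_le (hTmeas i) measurable_const) measurable_const
        (hTmeas i)
    · exact measurable_const
  have hAint : ∀ i, ∫⁻ ω, A i ω ∂μ ≤ c i ^ ((1:ℝ)/6) * M := by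
    intro i
    by_cases hi : Function.Injective i <;> simp only [hAdef, hi, if_true, if_false]
    · exact hTrunc i hi
    · simp
  -- partial sums
  set SA : ℕ → Ω → ℝ≥0∞ := fun n ω => ∑ i ∈ Tup n, A i ω with hSAdef
  set SB : ℕ → Ω → ℝ≥0∞ := fun n ω => ∑ i ∈ Tup n, B i ω with hSBdef
  set ST : ℕ → Ω → ℝ≥0∞ := fun n ω => ∑ i ∈ Tup n, TT i ω with hSTdef
  have hSTsplit : ∀ n ω, ST n ω = SA n ω + SB n ω := by
    intro n ω
    rw [hSTdef, hSAdef, hSBdef]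
    simp only
    rw [← Finset.sum_add_distrib]
    exact Finset.sum_congr rfl fun i _ => hABT i ω
  have hSAmeas : ∀ n, Measurable (SA n) :=
    fun n => Finset.measurable_sum _ fun i _ => hAmeas i
  have hSAbound : ∀ n : ℕ,
      ∫⁻ ω, SA n ω ∂μ ≤ (n:ℝ≥0∞) ^ m * (((n:ℝ≥0∞)) ^ r) ^ ((1:ℝ)/6) * M := by
    intro n
    rw [hSAdef]
    simp only
    rw [lintegral_finset_sum _ (fun i _ => hAmeas i)]
    have hb : ∀ i ∈ Tup n, ∫⁻ ω, A i ω ∂μ ≤ ((n:ℝ≥0∞) ^ r) ^ ((1:ℝ)/6) * M := by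
      intro i hi
      refine (hAint i).trans (mul_le_mul_left (ENNReal.rpow_le_rpow ?_ (by norm_num)) M)
      rw [hcdef]
      simp only
      have hcast : ((K i : ℕ):ℝ≥0∞) ≤ ((n:ℕ):ℝ≥0∞) := by exact_mod_cast hTupK n i hi
      exact pow_le_pow_left' hcast r
    calc ∑ i ∈ Tup n, ∫⁻ ω, A i ω ∂μ ≤ ∑ _i ∈ Tup n, ((n:ℝ≥0∞) ^ r) ^ ((1:ℝ)/6) * M :=
        Finset.sum_le_sum hb
      _ = ((Tup n).card : ℝ≥0∞) * (((n:ℝ≥0∞) ^ r) ^ ((1:ℝ)/6) * M) := by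
          rw [Finset.sum_const, nsmul_eq_mul]
      _ = (n:ℝ≥0∞) ^ m * (((n:ℝ≥0∞)) ^ r) ^ ((1:ℝ)/6) * M := by
          rw [hTupcard n, mul_assoc, Nat.cast_pow]
  -- good part: a.e. convergence along powers of two
  have hgood : ∀ᵐ ω ∂μ, Tendsto
      (fun jj : ℕ => SA (2^jj) ω * ((((2:ℕ)^jj : ℕ) : ℝ≥0∞) ^ r)⁻¹) atTop (𝓝 0) := by
    set e : ℝ := (m:ℝ) + (r:ℝ)*(1/6) - r with hedef
    have he : e < 0 := by rw [hedef, hrcast]; nlinarith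
    set q : ℝ≥0∞ := (2:ℝ≥0∞) ^ e with hqdef
    have hq1 : q < 1 := ENNReal.rpow_lt_one_of_one_lt_of_neg (by norm_num) he
    have hterm : ∀ jj : ℕ,
        ∫⁻ ω, SA (2^jj) ω * ((((2:ℕ)^jj : ℕ):ℝ≥0∞) ^ r)⁻¹ ∂μ ≤ M * q ^ jj := by
      intro jj
      rw [lintegral_mul_const _ (hSAmeas _)]
      refine (mul_le_mul_left (hSAbound (2^jj)) _).trans ?_
      have hb : (((2:ℕ)^jj : ℕ) : ℝ≥0∞) = (2:ℝ≥0∞) ^ ((jj:ℝ)) := by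
        push_cast
        rw [ENNReal.rpow_natCast]
      rw [hb, aux_pow_calc M m r jj, hqdef, hedef]
    have hsum : ∫⁻ ω, ∑' jj : ℕ, SA (2^jj) ω * ((((2:ℕ)^jj : ℕ):ℝ≥0∞) ^ r)⁻¹ ∂μ ≠ ⊤ := by
      rw [lintegral_tsum (fun jj => ((hSAmeas _).mul_const _).aemeasurable)]
      refine ne_top_of_le_ne_top ?_ (ENNReal.tsum_le_tsum hterm)
      rw [ENNReal.tsum_mul_left, ENNReal.tsum_geometric]
      exact ENNReal.mul_ne_top hMne (ENNReal.inv_ne_top.2 (tsub_pos_of_lt hq1).ne')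
    filter_upwards [ae_lt_top (Measurable.ennreal_tsum fun jj => (hSAmeas _).mul_const _) hsum]
      with ω hω
    exact ENNReal.tendsto_atTop_zero_of_tsum_ne_top hω.ne
  -- good part: full convergence
  have hgood' : ∀ᵐ ω ∂μ, Tendsto
      (fun n : ℕ => SA n ω * (((n : ℕ) : ℝ≥0∞) ^ r)⁻¹) atTop (𝓝 0) := by
    have h2r0 : ((2:ℝ≥0∞) ^ r) ≠ 0 := pow_ne_zero r (by norm_num)
    have h2rtop : ((2:ℝ≥0∞) ^ r) ≠ ⊤ := by
      exact ENNReal.pow_ne_top (by norm_num)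
    filter_upwards [hgood] with ω hω
    rw [ENNReal.tendsto_atTop_zero] at hω ⊢
    intro ε hε
    have hε' : 0 < ε * ((2:ℝ≥0∞) ^ r)⁻¹ := by
      refine ENNReal.mul_pos hε.ne' (ENNReal.inv_ne_zero.2 h2rtop)
    obtain ⟨J, hJ⟩ := hω (ε * ((2:ℝ≥0∞) ^ r)⁻¹) hε'
    refine ⟨2^(J+1), fun n hn => ?_⟩
    have hn1 : n ≠ 0 := by
      intro h0; rw [h0] at hn
      exact absurd (le_trans (Nat.one_le_two_pow) hn) (by norm_num)
    set jj := Nat.log 2 n with hjjdef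
    have h1 : 2^jj ≤ n := Nat.pow_log_le_self 2 hn1
    have h2 : n < 2^(jj+1) := Nat.lt_pow_succ_log_self (by norm_num) n
    have hJj : J ≤ jj := by
      have hlt : (2:ℕ)^(J+1) < 2^(jj+1) := lt_of_le_of_lt hn h2
      have := (Nat.pow_lt_pow_iff_right (a := 2) (by norm_num)).1 hlt
      omega
    have hmono : SA n ω ≤ SA (2^(jj+1)) ω := Finset.sum_le_sum_of_subset (hTupmono h2.le)
    have hinv : (((n:ℕ):ℝ≥0∞) ^ r)⁻¹ ≤ ((((2:ℕ)^jj : ℕ):ℝ≥0∞) ^ r)⁻¹ := by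
      have hcast : ((((2:ℕ)^jj:ℕ)):ℝ≥0∞) ≤ ((n:ℕ):ℝ≥0∞) := by exact_mod_cast h1
      exact ENNReal.inv_le_inv' (pow_le_pow_left' hcast r)
    have hsplit : ((((2:ℕ)^jj : ℕ):ℝ≥0∞) ^ r)⁻¹
        = ((((2:ℕ)^(jj+1) : ℕ):ℝ≥0∞) ^ r)⁻¹ * (2:ℝ≥0∞) ^ r := by
      have hexp : ((((2:ℕ)^(jj+1) : ℕ)):ℝ≥0∞) ^ r
          = (((2:ℕ)^jj : ℕ):ℝ≥0∞) ^ r * (2:ℝ≥0∞) ^ r := by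
        push_cast
        rw [pow_succ, mul_pow]
      rw [hexp, ENNReal.mul_inv (Or.inl (pow_ne_zero r (Nat.cast_ne_zero.2 (by positivity)))) (Or.inl (ENNReal.pow_ne_top (by norm_num))),
        mul_assoc, ENNReal.inv_mul_cancel h2r0 h2rtop, mul_one]
    calc SA n ω * (((n:ℕ):ℝ≥0∞) ^ r)⁻¹
        ≤ SA (2^(jj+1)) ω * ((((2:ℕ)^jj : ℕ):ℝ≥0∞) ^ r)⁻¹ := mul_le_mul' hmono hinv
      _ = SA (2^(jj+1)) ω * ((((2:ℕ)^(jj+1) : ℕ):ℝ≥0∞) ^ r)⁻¹ * (2:ℝ≥0∞) ^ r := by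
          rw [hsplit, mul_assoc]
      _ ≤ ε * ((2:ℝ≥0∞) ^ r)⁻¹ * (2:ℝ≥0∞) ^ r := mul_le_mul_left (hJ (jj+1) (by omega)) _
      _ = ε := by rw [mul_assoc, ENNReal.inv_mul_cancel h2r0 h2rtop, mul_one]
  -- bad part
  set E : (Fin m → ℕ) → Set Ω :=
    fun i => if Function.Injective i then {ω | c i < T i ω} else ∅ with hEdef
  have hEsum : ∑' i, μ (E i) ≠ ⊤ := by
    set t : ℝ := 5 * (r:ℝ) / (6 * m) with htdef
    have hmpos : (0:ℝ) < m := by linarith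
    have ht1 : 1 < t := by
      rw [htdef, hrcast, lt_div_iff₀ (by positivity)]
      nlinarith
    have ht0 : 0 ≤ t := by linarith
    set g : ℕ → ℝ≥0∞ := fun a => (((a + 1 : ℕ) : ℝ≥0∞) ^ t)⁻¹ with hgdef
    have hbound : ∀ i, μ (E i) ≤ M * ∏ j, g (i j) := by
      intro i
      by_cases hi : Function.Injective i
      · rw [hEdef]
        simp only [hi, if_true]
        refine (hMarkov i hi).trans (mul_le_mul_right ?_ M)
        have hc56 : c i ^ ((5:ℝ)/6) = ∏ _j : Fin m, ((K i : ℕ) : ℝ≥0∞) ^ t := by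
          rw [hcdef]
          simp only
          rw [Finset.prod_const, Finset.card_univ, Fintype.card_fin,
            ← ENNReal.rpow_natCast ((K i : ℕ) : ℝ≥0∞) r, ← ENNReal.rpow_mul,
            ← ENNReal.rpow_natCast (((K i : ℕ) : ℝ≥0∞) ^ t) m, ← ENNReal.rpow_mul]
          congr 1
          rw [htdef]
          field_simp
        have hgprod : ∏ j, g (i j) = (∏ j, ((i j + 1 : ℕ) : ℝ≥0∞) ^ t)⁻¹ := by
          rw [hgdef]
          simp only
          rw [ENNReal.prod_inv_distrib]
          intro a _ b _ _
          left
          simp [ENNReal.rpow_eq_zero_iff]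
        rw [hc56, hgprod]
        refine ENNReal.inv_le_inv' (Finset.prod_le_prod' fun j _ => ?_)
        refine ENNReal.rpow_le_rpow
          (show (((i j + 1 : ℕ)):ℝ≥0∞) ≤ ((K i : ℕ):ℝ≥0∞) by
            exact_mod_cast Nat.succ_le_of_lt (hKle i j)) ht0
      · rw [hEdef]
        simp [hi]
    refine ne_top_of_le_ne_top ?_ (ENNReal.tsum_le_tsum hbound)
    rw [ENNReal.tsum_mul_left, aux_tsum_pi m g]
    have hgsum : ∑' a, g a ≠ ⊤ := by
      have hsummable : Summable (fun a : ℕ => ((a + 1 : ℕ) : ℝ) ^ (-t)) := by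
        exact (summable_nat_add_iff (f := fun n : ℕ => ((n:ℝ)) ^ (-t)) 1).2
          (Real.summable_nat_rpow.2 (by linarith))
      have heq : ∀ a : ℕ, g a = ENNReal.ofReal (((a + 1 : ℕ) : ℝ) ^ (-t)) := by
        intro a
        rw [hgdef]
        simp only
        rw [Real.rpow_neg (by positivity), ENNReal.ofReal_inv_of_pos (by positivity),
          ← ENNReal.ofReal_rpow_of_pos (by positivity), ENNReal.ofReal_natCast]
      rw [tsum_congr heq, ← ENNReal.ofReal_tsum_of_nonneg (fun a => by positivity) hsummable]
      exact ENNReal.ofReal_ne_top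
    exact ENNReal.mul_ne_top hMne (ENNReal.pow_ne_top hgsum)
  have hbad : ∀ᵐ ω ∂μ, ∃ C : ℝ≥0∞, C ≠ ⊤ ∧ ∀ n, SB n ω ≤ C := by
    filter_upwards [MeasureTheory.ae_finite_setOf_mem hEsum] with ω hfin
    refine ⟨∑ i ∈ hfin.toFinset, T i ω, ?_, ?_⟩
    · exact (ENNReal.sum_lt_top.2 fun i _ => (hTfin i ω).lt_top).ne
    · intro n
      have hBT : ∀ i, B i ω ≤ T i ω := by
        intro i
        rw [hBdef]
        simp only
        split_ifs <;> simp
      have hsub : ∀ i ∈ Tup n, B i ω ≠ 0 → i ∈ hfin.toFinset := by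
        intro i _ hBne
        rw [Set.Finite.mem_toFinset]
        by_cases hi : Function.Injective i
        · have hnle : ¬ (T i ω ≤ c i) := by
            intro hle
            apply hBne
            rw [hBdef]
            simp [hi, hle]
          show ω ∈ E i
          rw [hEdef]
          simp only [hi, if_true, Set.mem_setOf_eq]
          exact not_le.1 hnle
        · exfalso
          apply hBne
          rw [hBdef]
          simp [hi]
      calc SB n ω ≤ ∑ i ∈ hfin.toFinset, B i ω := Finset.sum_le_sum_of_ne_zero hsub
        _ ≤ ∑ i ∈ hfin.toFinset, T i ω := Finset.sum_le_sum fun i _ => hBT i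
  -- combination
  have hST : ∀ᵐ ω ∂μ, Tendsto (fun n : ℕ => ST n ω * (((n:ℕ):ℝ≥0∞) ^ r)⁻¹) atTop (𝓝 0) := by
    filter_upwards [hgood', hbad] with ω hg hb
    obtain ⟨C, hCne, hC⟩ := hb
    have hSB0 : Tendsto (fun n : ℕ => SB n ω * (((n:ℕ):ℝ≥0∞) ^ r)⁻¹) atTop (𝓝 0) := by
      have h1 : Tendsto (fun n : ℕ => C * ((n:ℝ≥0∞))⁻¹) atTop (𝓝 0) := by
        have := ENNReal.Tendsto.const_mul (a := C) ENNReal.tendsto_inv_nat_nhds_zero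
          (Or.inr hCne)
        simpa using this
      rw [ENNReal.tendsto_atTop_zero] at h1 ⊢
      intro ε hε
      obtain ⟨N, hN⟩ := h1 ε hε
      refine ⟨max N 1, fun n hn => ?_⟩
      have hn1 : 1 ≤ n := le_trans (le_max_right N 1) hn
      refine le_trans ?_ (hN n (le_trans (le_max_left N 1) hn))
      refine mul_le_mul' (hC n) (ENNReal.inv_le_inv' ?_)
      exact le_self_pow₀ (by exact_mod_cast hn1) (by omega)
    have heq : (fun n : ℕ => ST n ω * (((n:ℕ):ℝ≥0∞) ^ r)⁻¹)
        = fun n : ℕ => SA n ω * (((n:ℕ):ℝ≥0∞) ^ r)⁻¹ + SB n ω * (((n:ℕ):ℝ≥0∞) ^ r)⁻¹ := by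
      funext n
      rw [hSTsplit n ω, add_mul]
    rw [heq]
    simpa using hg.add hSB0
  -- identification of the real sum
  have hSTofReal : ∀ (n : ℕ) (ω : Ω), ST n ω = ENNReal.ofReal
      (∑ i : Fin m → Fin n, if Function.Injective i then (h (fun j => X (i j) ω)) ^ 2 else 0) := by
    intro n ω
    rw [ENNReal.ofReal_sum_of_nonneg (fun i _ => by
      split_ifs
      · exact sq_nonneg _
      · exact le_refl 0)]
    simp_rw [apply_ite ENNReal.ofReal, ENNReal.ofReal_zero]
    rw [hSTdef]
    simp only
    refine (Finset.sum_bij (fun (a : Fin m → Fin n) (_ : a ∈ Finset.univ) => fun j => ((a j : ℕ)))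
      ?_ ?_ ?_ ?_).symm
    · intro a _
      exact (hTupmem n _).2 fun j => (a j).isLt
    · intro a _ b _ hab
      funext j
      exact Fin.val_injective (congrFun hab j)
    · intro i hi
      exact ⟨fun j => ⟨i j, (hTupmem n i).1 hi j⟩, Finset.mem_univ _, rfl⟩
    · intro a _
      have hiff : Function.Injective (fun j => ((a j : ℕ))) ↔ Function.Injective a :=
        ⟨fun hinj x y hxy => hinj (show ((a x : ℕ)) = ((a y : ℕ)) from congrArg _ hxy),
         fun hinj x y hxy => hinj (Fin.val_injective hxy)⟩
      rw [hTTdef]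
      simp only
      by_cases ha : Function.Injective a
      · rw [if_pos ha, if_pos (hiff.2 ha)]
      · rw [if_neg ha, if_neg (fun hc => ha (hiff.1 hc))]
  -- final squeeze
  filter_upwards [hST] with ω hω
  have hkey : Tendsto (fun n : ℕ => (2:ℝ)^r * ((ST n ω * (((n:ℕ):ℝ≥0∞) ^ r)⁻¹).toReal))
      atTop (𝓝 0) := by
    have h1 : Tendsto (fun n : ℕ => (ST n ω * (((n:ℕ):ℝ≥0∞) ^ r)⁻¹).toReal) atTop (𝓝 0) := by
      have := (ENNReal.tendsto_toReal (a := 0) (by simp)).comp hω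
      simpa only [Function.comp_def, ENNReal.toReal_zero] using this
    simpa using h1.const_mul ((2:ℝ)^r)
  refine squeeze_zero' ?_ ?_ hkey
  · filter_upwards with n
    refine mul_nonneg (by positivity) (Finset.sum_nonneg fun i _ => ?_)
    split_ifs
    · exact sq_nonneg _
    · exact le_refl 0
  · filter_upwards [eventually_ge_atTop (2*r), eventually_ge_atTop 1] with n hn2r hn1
    have hrn : r ≤ n := by omega
    have hsum_nonneg : 0 ≤ ∑ i : Fin m → Fin n,
        (if Function.Injective i then (h (fun j => X (i j) ω)) ^ 2 else 0) :=
      Finset.sum_nonneg fun i _ => by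
        split_ifs
        · exact sq_nonneg _
        · exact le_refl 0
    have htoReal : (ST n ω).toReal = ∑ i : Fin m → Fin n,
        (if Function.Injective i then (h (fun j => X (i j) ω)) ^ 2 else 0) := by
      rw [hSTofReal n ω, ENNReal.toReal_ofReal hsum_nonneg]
    rw [ENNReal.toReal_mul, ENNReal.toReal_inv, ENNReal.toReal_pow, ENNReal.toReal_natCast,
      htoReal]
    have hfrac : ((n - r)! : ℝ) / (n ! : ℝ) ≤ (2:ℝ)^r * (((n:ℝ)^r)⁻¹) := by
      have hid : ((n - r)! : ℕ) * (n.descFactorial r) = n ! := Nat.factorial_mul_descFactorial hrn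
      have hdpos : (0:ℝ) < (n.descFactorial r : ℝ) := by
        have : n.descFactorial r ≠ 0 := by
          intro h0
          exact absurd (Nat.descFactorial_eq_zero_iff_lt.1 h0) (not_lt.2 hrn)
        exact_mod_cast Nat.pos_of_ne_zero this
      have hfe : ((n - r)! : ℝ) / (n ! : ℝ) = ((n.descFactorial r : ℝ))⁻¹ := by
        have hcast : (n ! : ℝ) = ((n - r)! : ℝ) * (n.descFactorial r : ℝ) := by
          exact_mod_cast hid.symm
        rw [hcast]
        have hfacpos : (0:ℝ) < ((n - r)! : ℝ) := by exact_mod_cast Nat.factorial_pos (n - r)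
        field_simp
      have hhalf : ((n:ℝ)/2)^r ≤ (n.descFactorial r : ℝ) := by
        have hnat : (n + 1 - r)^r ≤ n.descFactorial r := Nat.pow_sub_le_descFactorial n r
        have hcast2 : ((n:ℝ)/2) ≤ ((n + 1 - r : ℕ) : ℝ) := by
          rw [Nat.cast_sub (by omega)]
          push_cast
          have : (2*(r:ℝ)) ≤ (n:ℝ) := by exact_mod_cast hn2r
          linarith
        calc ((n:ℝ)/2)^r ≤ (((n+1-r : ℕ):ℝ))^r := pow_le_pow_left₀ (by positivity) hcast2 r
          _ = (((n+1-r)^r : ℕ) : ℝ) := by push_cast; ring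
          _ ≤ _ := Nat.cast_le.2 hnat
      have hnpos : (0:ℝ) < ((n:ℝ)/2)^r := by
        have : (0:ℝ) < (n:ℝ) := by exact_mod_cast hn1
        positivity
      calc ((n - r)! : ℝ) / (n ! : ℝ) = ((n.descFactorial r : ℝ))⁻¹ := hfe
        _ ≤ (((n:ℝ)/2)^r)⁻¹ := by
            exact inv_anti₀ hnpos hhalf
        _ = (2:ℝ)^r * (((n:ℝ)^r)⁻¹) := by
            rw [div_pow, inv_div, div_eq_mul_inv]
    calc ((n - r)! : ℝ) / (n ! : ℝ) * (∑ i : Fin m → Fin n,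
          if Function.Injective i then (h (fun j => X (i j) ω)) ^ 2 else 0)
        ≤ ((2:ℝ)^r * (((n:ℝ)^r)⁻¹)) * (∑ i : Fin m → Fin n,
          if Function.Injective i then (h (fun j => X (i j) ω)) ^ 2 else 0) :=
          mul_le_mul_of_nonneg_right hfrac hsum_nonneg
      _ = (2:ℝ)^r * ((∑ i : Fin m → Fin n,
          if Function.Injective i then (h (fun j => X (i j) ω)) ^ 2 else 0) * (((n:ℝ))^r)⁻¹) := by
          ring
end

section
/- Let X₁, X₂,… be i.i.d., h a kernel of order m ≥ 2 with E|h(X₁,…,X_m)|^{5/3} < ∞, and define the truncated conditional-expectation tail h̃*(x) = E( h(X₁,…,X_m) 1(|h| > n^{3m/5}) | X₁ = x ). Then (1/(n−2m+2)) Σ_{i ∈ I_n} h̃*(X_i)² = o_P(1) as n → ∞, where I_n = {1,…,n} \ {2,…,2m−1}. -/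
open MeasureTheory ProbabilityTheory Filter Finset

/-- Proposition 8(b), key step: with `h̃*(x) = E(h·1(|h| > n^{3m/5}) | X₁ = x)`,
`(1/(n−2m+2)) Σ_{i ∈ Iₙ} h̃*(Xᵢ)² = o_P(1)`, where `Iₙ = {1,…,n} \ {2,…,2m−1}`. -/
theorem stmt13 {Ω : Type*} [MeasurableSpace Ω] (μ : Measure Ω) [IsProbabilityMeasure μ]
    (m : ℕ) (hm : 2 ≤ m)
    (X : ℕ → Ω → ℝ) (hXmeas : ∀ i, Measurable (X i))
    (hindep : iIndepFun X μ)
    (hident : ∀ i, μ.map (X i) = μ.map (X 0))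
    (h : (Fin m → ℝ) → ℝ) (hmeas : Measurable h)
    (hint : Integrable (fun ω => |h (fun j => X j ω)| ^ ((5 : ℝ) / 3)) μ)
    (g : ℕ → ℝ → ℝ) (hgmeas : ∀ n, Measurable (g n))
    (hgver : ∀ n : ℕ, (fun ω => g n (X 0 ω)) =ᵐ[μ]
      μ[(fun ω => if (n : ℝ) ^ ((3 * m : ℝ) / 5) < |h (fun j => X j ω)| then
          h (fun j => X j ω) else 0) |
        MeasurableSpace.comap (X 0) inferInstance]) :
    ∀ ε > (0 : ℝ), Tendsto
      (fun n : ℕ => (μ {ω | ε ≤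
        |((n : ℝ) - 2 * m + 2)⁻¹ *
          ∑ i ∈ range n \ Ico 1 (2 * m - 1), (g n (X i ω)) ^ 2|}).toReal)
      atTop (nhds 0) := by
  intro ε hε
  set H : Ω → ℝ := fun ω => h (fun j => X j ω) with hH
  have hHmeas : Measurable H := hmeas.comp (measurable_pi_lambda _ fun j => hXmeas j)
  set C : ℝ := ∫ ω, |H ω| ^ ((5 : ℝ) / 3) ∂μ with hCdef
  have hC0 : 0 ≤ C := integral_nonneg fun ω => Real.rpow_nonneg (abs_nonneg _) _
  set D : ℝ := (Real.sqrt (ε / 2))⁻¹ * C with hDdef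
  have hD0 : 0 ≤ D := by positivity
  -- key quantitative bound for large n
  have key : ∀ n : ℕ, 4 * m ≤ n →
      (μ {ω | ε ≤ |((n : ℝ) - 2 * m + 2)⁻¹ *
          ∑ i ∈ range n \ Ico 1 (2 * m - 1), (g n (X i ω)) ^ 2|}).toReal
        ≤ D * (n : ℝ) ^ (-(3 / 10 : ℝ)) := by
    intro n hn
    have hn1 : 1 ≤ n := le_trans (by omega) hn
    have hn0 : (0 : ℝ) < n := by exact_mod_cast Nat.lt_of_lt_of_le Nat.zero_lt_one hn1
    have hn1' : (1 : ℝ) ≤ n := by exact_mod_cast hn1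
    set t : ℝ := (n : ℝ) ^ ((3 * m : ℝ) / 5) with htdef
    have ht1 : (1 : ℝ) ≤ t := Real.one_le_rpow hn1' (by positivity)
    set c : ℝ := (n : ℝ) ^ (-((2 * m : ℝ) / 5)) with hcdef
    have hc0 : 0 < c := Real.rpow_pos_of_pos hn0 _
    set f : Ω → ℝ := fun ω => if t < |H ω| then H ω else 0 with hfdef
    -- pointwise bound on f
    have hfle : ∀ ω, |f ω| ≤ c * |H ω| ^ ((5 : ℝ) / 3) := by
      intro ω
      by_cases hc : t < |H ω|
      · simp only [hfdef, if_pos hc]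
        have hH0 : (0 : ℝ) < |H ω| := lt_trans (lt_of_lt_of_le zero_lt_one ht1) hc
        rw [hcdef, Real.rpow_neg hn0.le, inv_mul_eq_div, le_div_iff₀ (Real.rpow_pos_of_pos hn0 _)]
        have h1 : (n : ℝ) ^ ((2 * m : ℝ) / 5) = t ^ ((2 : ℝ) / 3) := by
          rw [htdef, ← Real.rpow_mul hn0.le]
          norm_num
          ring_nf
        have h2 : |H ω| ^ ((5 : ℝ) / 3) = |H ω| * |H ω| ^ ((2 : ℝ) / 3) := by
          rw [← Real.rpow_one_add' hH0.le (by norm_num)]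
          norm_num
        rw [h1, h2]
        exact mul_le_mul_of_nonneg_left
          (Real.rpow_le_rpow (by linarith) hc.le (by norm_num)) (abs_nonneg _)
      · simp only [hfdef, if_neg hc, abs_zero]
        positivity
    have hfmeas : Measurable f := Measurable.ite (measurableSet_lt measurable_const hHmeas.abs)
      hHmeas measurable_const
    have hfint : Integrable f μ := by
      refine (hint.const_mul c).mono' hfmeas.aestronglyMeasurable ?_
      exact Eventually.of_forall fun ω => by simpa using hfle ω
    have hfabsint : Integrable (fun ω => |f ω|) μ := hfint.abs
    -- integral of |f| is small
    have hfI : ∫ ω, |f ω| ∂μ ≤ c * C := by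
      calc ∫ ω, |f ω| ∂μ ≤ ∫ ω, c * |H ω| ^ ((5 : ℝ) / 3) ∂μ :=
            integral_mono hfabsint (hint.const_mul c) hfle
        _ = c * C := by rw [integral_const_mul]
    -- g n ∘ X 0
    have hg0int : Integrable (fun ω => g n (X 0 ω)) μ :=
      (integrable_condExp).congr (hgver n).symm
    have hg0I : ∫ ω, |g n (X 0 ω)| ∂μ ≤ c * C := by
      have he : (fun ω => |g n (X 0 ω)|) =ᵐ[μ]
          fun ω => |(μ[f | MeasurableSpace.comap (X 0) inferInstance]) ω| :=
        (hgver n).mono fun ω hω => by simp only [hω]; rfl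
      calc ∫ ω, |g n (X 0 ω)| ∂μ
          = ∫ ω, |(μ[f | MeasurableSpace.comap (X 0) inferInstance]) ω| ∂μ :=
            integral_congr_ae he
        _ ≤ ∫ ω, |f ω| ∂μ := integral_abs_condExp_le f
        _ ≤ c * C := hfI
    -- transfer to any X i
    have hgiint : ∀ i, Integrable (fun ω => g n (X i ω)) μ := by
      intro i
      have h0 : Integrable (g n) (μ.map (X 0)) :=
        (integrable_map_measure (hgmeas n).aestronglyMeasurable
          (hXmeas 0).aemeasurable).mpr hg0int
      have : Integrable (g n) (μ.map (X i)) := by rw [hident i]; exact h0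
      exact (integrable_map_measure (hgmeas n).aestronglyMeasurable
        (hXmeas i).aemeasurable).mp this
    have hgiI : ∀ i, ∫ ω, |g n (X i ω)| ∂μ ≤ c * C := by
      intro i
      have e1 : ∫ ω, |g n (X i ω)| ∂μ = ∫ x, |g n x| ∂(μ.map (X i)) :=
        (integral_map (hXmeas i).aemeasurable (hgmeas n).abs.aestronglyMeasurable).symm
      have e2 : ∫ x, |g n x| ∂(μ.map (X 0)) = ∫ ω, |g n (X 0 ω)| ∂μ :=
        integral_map (hXmeas 0).aemeasurable (hgmeas n).abs.aestronglyMeasurable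
      rw [e1, hident i, e2]; exact hg0I
    -- the sum Y
    set S : Finset ℕ := range n \ Ico 1 (2 * m - 1) with hSdef
    have hScard : (S.card : ℝ) = (n : ℝ) - 2 * m + 2 := by
      have hsub : Ico 1 (2 * m - 1) ⊆ range n := by
        intro x hx
        simp only [mem_Ico] at hx
        simp only [mem_range]
        omega
      rw [hSdef, card_sdiff_of_subset hsub, Nat.card_Ico, card_range]
      have : 2 * m - 1 - 1 = 2 * m - 2 := by omega
      rw [this, Nat.cast_sub (by omega)]
      push_cast [Nat.cast_sub (show 2 ≤ 2 * m by omega)]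
      ring
    set N : ℝ := (n : ℝ) - 2 * m + 2 with hNdef
    have hN0 : (0 : ℝ) < N := by
      rw [hNdef]
      have : (4 * m : ℝ) ≤ n := by exact_mod_cast hn
      have hm' : (2 : ℝ) ≤ m := by exact_mod_cast hm
      nlinarith
    have hNn : N ≤ (n : ℝ) := by
      have hm' : (2 : ℝ) ≤ m := by exact_mod_cast hm
      rw [hNdef]; linarith
    have hNhalf : (n : ℝ) / 2 ≤ N := by
      rw [hNdef]
      have : (4 * m : ℝ) ≤ n := by exact_mod_cast hn
      linarith
    set Y : Ω → ℝ := fun ω => ∑ i ∈ S, |g n (X i ω)| with hYdef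
    have hYint : Integrable Y μ := integrable_finset_sum S fun i _ => (hgiint i).abs
    have hYnn : ∀ ω, 0 ≤ Y ω := fun ω => Finset.sum_nonneg fun i _ => abs_nonneg _
    have hYI : ∫ ω, Y ω ∂μ ≤ N * (c * C) := by
      rw [hYdef]
      calc ∫ ω, ∑ i ∈ S, |g n (X i ω)| ∂μ = ∑ i ∈ S, ∫ ω, |g n (X i ω)| ∂μ :=
            integral_finset_sum S fun i _ => (hgiint i).abs
        _ ≤ ∑ _i ∈ S, c * C := Finset.sum_le_sum fun i _ => hgiI i
        _ = (S.card : ℝ) * (c * C) := by rw [Finset.sum_const, nsmul_eq_mul]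
        _ = N * (c * C) := by rw [hScard]
    -- set inclusion
    have hsub : {ω | ε ≤ |N⁻¹ * ∑ i ∈ S, (g n (X i ω)) ^ 2|}
        ⊆ {ω | Real.sqrt (ε * N) ≤ Y ω} := by
      intro ω hω
      simp only [Set.mem_setOf_eq] at hω ⊢
      have hs0 : 0 ≤ ∑ i ∈ S, (g n (X i ω)) ^ 2 :=
        Finset.sum_nonneg fun i _ => sq_nonneg _
      have habs : |N⁻¹ * ∑ i ∈ S, (g n (X i ω)) ^ 2| = N⁻¹ * ∑ i ∈ S, (g n (X i ω)) ^ 2 :=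
        abs_of_nonneg (mul_nonneg (inv_nonneg.mpr hN0.le) hs0)
      rw [habs] at hω
      have h1 : ε * N ≤ ∑ i ∈ S, (g n (X i ω)) ^ 2 := by
        have := mul_le_mul_of_nonneg_left hω hN0.le
        calc ε * N = N * ε := mul_comm _ _
          _ ≤ N * (N⁻¹ * ∑ i ∈ S, (g n (X i ω)) ^ 2) := this
          _ = ∑ i ∈ S, (g n (X i ω)) ^ 2 := by field_simp
      have h2 : ∑ i ∈ S, (g n (X i ω)) ^ 2 ≤ (Y ω) ^ 2 := by
        rw [hYdef]
        calc ∑ i ∈ S, (g n (X i ω)) ^ 2 = ∑ i ∈ S, |g n (X i ω)| ^ 2 := by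
              simp [sq_abs]
          _ ≤ (∑ i ∈ S, |g n (X i ω)|) ^ 2 :=
              Finset.sum_sq_le_sq_sum_of_nonneg fun i _ => abs_nonneg _
      have h3 : ε * N ≤ (Y ω) ^ 2 := le_trans h1 h2
      calc Real.sqrt (ε * N) ≤ Real.sqrt ((Y ω) ^ 2) := Real.sqrt_le_sqrt h3
        _ = Y ω := Real.sqrt_sq (hYnn ω)
    -- Markov
    have hsqrt0 : 0 < Real.sqrt (ε * N) := Real.sqrt_pos.mpr (mul_pos hε hN0)
    have hmarkov : Real.sqrt (ε * N) * (μ {ω | Real.sqrt (ε * N) ≤ Y ω}).toReal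
        ≤ ∫ ω, Y ω ∂μ :=
      mul_meas_ge_le_integral_of_nonneg (Eventually.of_forall hYnn) hYint _
    have hmono : (μ {ω | ε ≤ |N⁻¹ * ∑ i ∈ S, (g n (X i ω)) ^ 2|}).toReal
        ≤ (μ {ω | Real.sqrt (ε * N) ≤ Y ω}).toReal :=
      ENNReal.toReal_mono (measure_ne_top μ _) (measure_mono hsub)
    have hbound : (μ {ω | ε ≤ |N⁻¹ * ∑ i ∈ S, (g n (X i ω)) ^ 2|}).toReal
        ≤ (Real.sqrt (ε * N))⁻¹ * (N * (c * C)) := by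
      have hmarkov' : (μ {ω | Real.sqrt (ε * N) ≤ Y ω}).toReal
          ≤ (∫ ω, Y ω ∂μ) / Real.sqrt (ε * N) := (le_div_iff₀' hsqrt0).mpr hmarkov
      calc (μ {ω | ε ≤ |N⁻¹ * ∑ i ∈ S, (g n (X i ω)) ^ 2|}).toReal
          ≤ (μ {ω | Real.sqrt (ε * N) ≤ Y ω}).toReal := hmono
        _ ≤ (∫ ω, Y ω ∂μ) / Real.sqrt (ε * N) := hmarkov'
        _ ≤ (N * (c * C)) / Real.sqrt (ε * N) := by gcongr
        _ = (Real.sqrt (ε * N))⁻¹ * (N * (c * C)) := by rw [div_eq_inv_mul]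
    -- bound the RHS by D * n^{-3/10}
    have hrhs : (Real.sqrt (ε * N))⁻¹ * (N * (c * C)) ≤ D * (n : ℝ) ^ (-(3 / 10 : ℝ)) := by
      have hinv : (Real.sqrt (ε * N))⁻¹ ≤ (Real.sqrt (ε * ((n : ℝ) / 2)))⁻¹ := by
        apply inv_anti₀
        · exact Real.sqrt_pos.mpr (by positivity)
        · exact Real.sqrt_le_sqrt (by nlinarith)
      have hsq : Real.sqrt (ε * ((n : ℝ) / 2)) = Real.sqrt (ε / 2) * (n : ℝ) ^ ((1 : ℝ) / 2) := by
        rw [show ε * ((n : ℝ) / 2) = (ε / 2) * n by ring, Real.sqrt_mul (by positivity),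
          Real.sqrt_eq_rpow, Real.sqrt_eq_rpow]
      have step1 : (Real.sqrt (ε * N))⁻¹ * (N * (c * C))
          ≤ (Real.sqrt (ε / 2))⁻¹ * ((n : ℝ) ^ (-(1 : ℝ) / 2) * ((n : ℝ) * (c * C))) := by
        have hmul : N * (c * C) ≤ (n : ℝ) * (c * C) :=
          mul_le_mul_of_nonneg_right hNn (by positivity)
        calc (Real.sqrt (ε * N))⁻¹ * (N * (c * C))
            ≤ (Real.sqrt (ε * ((n : ℝ) / 2)))⁻¹ * ((n : ℝ) * (c * C)) := by
              apply mul_le_mul hinv hmul (by positivity) (by positivity)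
          _ = (Real.sqrt (ε / 2))⁻¹ * ((n : ℝ) ^ (-(1 : ℝ) / 2) * ((n : ℝ) * (c * C))) := by
              rw [hsq, mul_inv, mul_assoc, ← Real.rpow_neg_one ((n : ℝ) ^ ((1 : ℝ) / 2)),
                ← Real.rpow_mul hn0.le]
              norm_num
      have step2 : (n : ℝ) ^ (-(1 : ℝ) / 2) * ((n : ℝ) * (c * C))
          ≤ (n : ℝ) ^ (-(3 / 10 : ℝ)) * C := by
        have hm' : (2 : ℝ) ≤ m := by exact_mod_cast hm
        have hexp : (n : ℝ) ^ (-(1 : ℝ) / 2) * ((n : ℝ) * c)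
            = (n : ℝ) ^ (-(1 : ℝ) / 2 + 1 + -((2 * m : ℝ) / 5)) := by
          rw [hcdef, Real.rpow_add hn0, Real.rpow_add hn0, Real.rpow_one]
          ring
        have hle : (n : ℝ) ^ (-(1 : ℝ) / 2 + 1 + -((2 * m : ℝ) / 5)) ≤ (n : ℝ) ^ (-(3 / 10 : ℝ)) :=
          Real.rpow_le_rpow_of_exponent_le hn1' (by linarith)
        calc (n : ℝ) ^ (-(1 : ℝ) / 2) * ((n : ℝ) * (c * C))
            = ((n : ℝ) ^ (-(1 : ℝ) / 2) * ((n : ℝ) * c)) * C := by ring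
          _ = (n : ℝ) ^ (-(1 : ℝ) / 2 + 1 + -((2 * m : ℝ) / 5)) * C := by rw [hexp]
          _ ≤ (n : ℝ) ^ (-(3 / 10 : ℝ)) * C := mul_le_mul_of_nonneg_right hle hC0
      calc (Real.sqrt (ε * N))⁻¹ * (N * (c * C))
          ≤ (Real.sqrt (ε / 2))⁻¹ * ((n : ℝ) ^ (-(1 : ℝ) / 2) * ((n : ℝ) * (c * C))) := step1
        _ ≤ (Real.sqrt (ε / 2))⁻¹ * ((n : ℝ) ^ (-(3 / 10 : ℝ)) * C) :=
            mul_le_mul_of_nonneg_left step2 (by positivity)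
        _ = D * (n : ℝ) ^ (-(3 / 10 : ℝ)) := by rw [hDdef]; ring
    exact le_trans hbound hrhs
  -- squeeze
  have htend : Tendsto (fun n : ℕ => D * (n : ℝ) ^ (-(3 / 10 : ℝ))) atTop (nhds 0) := by
    have h1 : Tendsto (fun n : ℕ => ((n : ℝ)) ^ (-(3 / 10 : ℝ))) atTop (nhds 0) :=
      (tendsto_rpow_neg_atTop (by norm_num : (0 : ℝ) < 3 / 10)).comp tendsto_natCast_atTop_atTop
    simpa using h1.const_mul D
  refine tendsto_of_tendsto_of_tendsto_of_le_of_le' tendsto_const_nhds htend ?_ ?_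
  · exact Eventually.of_forall fun n => ENNReal.toReal_nonneg
  · filter_upwards [eventually_ge_atTop (4 * m)] with n hn
    exact key n hn
end
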